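/- The operator T for the q_{ij}-CCR satisfies the braid relation T₁T₂T₁ = T₂T₁T₂ on the triple tensor power, where T₁ = T ⊗ 1 and T₂ = 1 ⊗ T. -/

import Mathlib

/-- `ampl1 d T` is the amplification `T ⊗ 1` of an operator `T` on
`ℂ^d ⊗ ℂ^d` (modelled as `EuclideanSpace ℂ (Fin d × Fin d)`) to the triple
tensor power, acting on the first two tensor factors. -/
noncomputable def ampl1 (d : ℕ)
    (T : EuclideanSpace ℂ (Fin d × Fin d) →L[ℂ] EuclideanSpace ℂ (Fin d × Fin d)) :
    EuclideanSpace ℂ (Fin d × Fin d × Fin d) →L[ℂ] EuclideanSpace ℂ (Fin d × Fin d × Fin d) :=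
  LinearMap.toContinuousLinearMap
    { toFun := fun x => WithLp.toLp 2 (fun p =>
        T (WithLp.toLp 2 (fun r => x (r.1, r.2, p.2.2) : Fin d × Fin d → ℂ)) (p.1, p.2.1)
        : Fin d × Fin d × Fin d → ℂ)
      map_add' := by
        intro x y; ext p
        have : (WithLp.toLp 2 (fun r => (x + y) (r.1, r.2, p.2.2) : Fin d × Fin d → ℂ) :
            EuclideanSpace ℂ (Fin d × Fin d)) =
            (WithLp.toLp 2 (fun r => x (r.1, r.2, p.2.2) : Fin d × Fin d → ℂ) :
            EuclideanSpace ℂ (Fin d × Fin d)) +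
            WithLp.toLp 2 (fun r => y (r.1, r.2, p.2.2) : Fin d × Fin d → ℂ) := rfl
        show T _ _ = _
        rw [this, map_add]; rfl
      map_smul' := by
        intro c x; ext p
        have : (WithLp.toLp 2 (fun r => (c • x) (r.1, r.2, p.2.2) : Fin d × Fin d → ℂ) :
            EuclideanSpace ℂ (Fin d × Fin d)) =
            c • (WithLp.toLp 2 (fun r => x (r.1, r.2, p.2.2) : Fin d × Fin d → ℂ) :
            EuclideanSpace ℂ (Fin d × Fin d)) := rfl
        show T _ _ = _
        rw [this, map_smul]; rfl }

/-- `ampl2 d T` is the amplification `1 ⊗ T`, acting on the last two tensor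
factors of the triple tensor power. -/
noncomputable def ampl2 (d : ℕ)
    (T : EuclideanSpace ℂ (Fin d × Fin d) →L[ℂ] EuclideanSpace ℂ (Fin d × Fin d)) :
    EuclideanSpace ℂ (Fin d × Fin d × Fin d) →L[ℂ] EuclideanSpace ℂ (Fin d × Fin d × Fin d) :=
  LinearMap.toContinuousLinearMap
    { toFun := fun x => WithLp.toLp 2 (fun p =>
        T (WithLp.toLp 2 (fun r => x (p.1, r.1, r.2) : Fin d × Fin d → ℂ)) (p.2.1, p.2.2)
        : Fin d × Fin d × Fin d → ℂ)
      map_add' := by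
        intro x y; ext p
        have : (WithLp.toLp 2 (fun r => (x + y) (p.1, r.1, r.2) : Fin d × Fin d → ℂ) :
            EuclideanSpace ℂ (Fin d × Fin d)) =
            (WithLp.toLp 2 (fun r => x (p.1, r.1, r.2) : Fin d × Fin d → ℂ) :
            EuclideanSpace ℂ (Fin d × Fin d)) +
            WithLp.toLp 2 (fun r => y (p.1, r.1, r.2) : Fin d × Fin d → ℂ) := rfl
        show T _ _ = _
        rw [this, map_add]; rfl
      map_smul' := by
        intro c x; ext p
        have : (WithLp.toLp 2 (fun r => (c • x) (p.1, r.1, r.2) : Fin d × Fin d → ℂ) :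
            EuclideanSpace ℂ (Fin d × Fin d)) =
            c • (WithLp.toLp 2 (fun r => x (p.1, r.1, r.2) : Fin d × Fin d → ℂ) :
            EuclideanSpace ℂ (Fin d × Fin d)) := rfl
        show T _ _ = _
        rw [this, map_smul]; rfl }

/-- The operator `T` of the `q_{ij}`-CCR, given by
`T (e_i ⊗ e_j) = q i j • (e_j ⊗ e_i)` with `q j i = conj (q i j)`, satisfies the
braid relation `T₁ T₂ T₁ = T₂ T₁ T₂` on the triple tensor power, where
`T₁ = T ⊗ 1` and `T₂ = 1 ⊗ T`. -/
theorem qccr_T_braid (d : ℕ) (hd : 1 ≤ d) (q : Fin d → Fin d → ℂ)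
    (hq : ∀ i j : Fin d, q j i = starRingEnd ℂ (q i j))
    (T : EuclideanSpace ℂ (Fin d × Fin d) →L[ℂ] EuclideanSpace ℂ (Fin d × Fin d))
    (hT : ∀ i j : Fin d,
      T (EuclideanSpace.single (i, j) (1 : ℂ)) =
        q i j • EuclideanSpace.single (j, i) (1 : ℂ)) :
    ampl1 d T ∘L ampl2 d T ∘L ampl1 d T = ampl2 d T ∘L ampl1 d T ∘L ampl2 d T := by
  have hTx : ∀ (x : EuclideanSpace ℂ (Fin d × Fin d)) (a b : Fin d),
      T x (a, b) = q b a * x (b, a) := by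
    intro x a b
    have hx : x = ∑ p : Fin d × Fin d, x p • EuclideanSpace.single p (1:ℂ) := by
      ext r
      rw [WithLp.ofLp_sum, Finset.sum_apply]
      simp [EuclideanSpace.single_apply]
    conv_lhs => rw [hx]
    rw [map_sum]
    have : ∀ p : Fin d × Fin d, T (x p • EuclideanSpace.single p (1:ℂ)) =
        (x p * q p.1 p.2) • EuclideanSpace.single (p.2, p.1) (1:ℂ) := by
      intro p
      rw [map_smul, hT p.1 p.2, smul_smul]
    simp only [this]
    have hsum : (∑ p : Fin d × Fin d, (x p * q p.1 p.2) •
        EuclideanSpace.single (p.2, p.1) (1:ℂ)) (a, b) =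
        ∑ p : Fin d × Fin d, ((x p * q p.1 p.2) •
        EuclideanSpace.single (p.2, p.1) (1:ℂ)) (a, b) := by
      rw [WithLp.ofLp_sum, Finset.sum_apply]
    rw [hsum]
    rw [Finset.sum_eq_single (b, a)]
    · simp [EuclideanSpace.single_apply, mul_comm]
    · intro p _ hp
      have hne : (p.2, p.1) ≠ (a, b) := by
        intro h
        apply hp
        have h1 : p.2 = a := congrArg Prod.fst h
        have h2 : p.1 = b := congrArg Prod.snd h
        exact Prod.ext h2 h1
      simp [EuclideanSpace.single_apply, hne, Ne.symm hne]
    · intro h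
      exact absurd (Finset.mem_univ _) h
  have h1 : ∀ (x : EuclideanSpace ℂ (Fin d × Fin d × Fin d)) (p : Fin d × Fin d × Fin d),
      ampl1 d T x p = q p.2.1 p.1 * x (p.2.1, p.1, p.2.2) := by
    intro x p
    have : ampl1 d T x p = T (WithLp.toLp 2 (fun r => x (r.1, r.2, p.2.2) : Fin d × Fin d → ℂ)) (p.1, p.2.1) := rfl
    rw [this, hTx]
  have h2 : ∀ (x : EuclideanSpace ℂ (Fin d × Fin d × Fin d)) (p : Fin d × Fin d × Fin d),
      ampl2 d T x p = q p.2.2 p.2.1 * x (p.1, p.2.2, p.2.1) := by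
    intro x p
    have : ampl2 d T x p = T (WithLp.toLp 2 (fun r => x (p.1, r.1, r.2) : Fin d × Fin d → ℂ)) (p.2.1, p.2.2) := rfl
    rw [this, hTx]
  ext x p
  simp only [ContinuousLinearMap.comp_apply, h1, h2]
  ring
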